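/- Rough Gronwall Lemma: Fix a time horizon T > 0 and let G : [0,T] → [0,∞) be a path such that for some constants C, L > 0, κ ≥ 1, a regular control ω₁ and a control ω₂ on [0,T], one has δG_{st} := G_t − G_s ≤ C (sup_{0≤r≤t} G_r) ω₁(s,t)^{1/κ} + ω₂(s,t) for every pair s < t in [0,T] satisfying ω₁(s,t) ≤ L. Then, with α := min(1, 1/(L(2Ce²)^κ)), it holds that sup_{0≤t≤T} G_t ≤ 2 exp(ω₁(0,T)/(αL)) · ( G_0 + sup_{0≤t≤T} ( ω₂(0,t) · exp(−ω₁(0,t)/(αL)) ) ). -/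

import Mathlib

set_option maxHeartbeats 8000000

/-- A control on the interval `[a,b]`: a nonnegative superadditive function of pairs
`s ≤ t` in `[a,b]`. -/
def IsControl (a b : ℝ) (ω : ℝ → ℝ → ℝ) : Prop :=
  (∀ s t, a ≤ s → s ≤ t → t ≤ b → 0 ≤ ω s t) ∧
  (∀ s u t, a ≤ s → s ≤ u → u ≤ t → t ≤ b → ω s u + ω u t ≤ ω s t)

/-- A regular control on `[a,b]`: a control with `ω(s,t) → 0` as `t - s → 0`. -/
def IsRegularControl (a b : ℝ) (ω : ℝ → ℝ → ℝ) : Prop :=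
  IsControl a b ω ∧
  ∀ ε > (0 : ℝ), ∃ δ > (0 : ℝ), ∀ s t, a ≤ s → s ≤ t → t ≤ b → t - s < δ → ω s t < ε

/-- Greedy sequence of times for the rough Gronwall lemma. -/
noncomputable def rgSeq (T a : ℝ) (ω : ℝ → ℝ → ℝ) : ℕ → ℝ
  | 0 => 0
  | k+1 => sSup {u : ℝ | u ∈ Set.Icc (rgSeq T a ω k) T ∧ ω (rgSeq T a ω k) u ≤ a}

/-- **Rough Gronwall Lemma.** Fix a time horizon `T > 0` and let `G : [0,T] → [0,∞)` be a
path such that for some constants `C, L > 0`, `κ ≥ 1`, a regular control `ω₁` and a control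
`ω₂` on `[0,T]`, one has
`G_t − G_s ≤ C (sup_{0 ≤ r ≤ t} G_r) ω₁(s,t)^{1/κ} + ω₂(s,t)`
for every `s < t` in `[0,T]` satisfying `ω₁(s,t) ≤ L`.  Then, with
`α := min(1, 1/(L(2Ce²)^κ))`,
`sup_{0 ≤ t ≤ T} G_t ≤ 2 exp(ω₁(0,T)/(αL)) (G_0 + sup_{0 ≤ t ≤ T}(ω₂(0,t) exp(−ω₁(0,t)/(αL))))`. -/
theorem rough_gronwall_lemma
    (T : ℝ) (hT : 0 < T) (G : ℝ → ℝ)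
    (hGnonneg : ∀ t ∈ Set.Icc (0 : ℝ) T, 0 ≤ G t)
    (C L κ : ℝ) (hC : 0 < C) (hL : 0 < L) (hκ : 1 ≤ κ)
    (ω₁ ω₂ : ℝ → ℝ → ℝ)
    (hω₁ : IsRegularControl 0 T ω₁) (hω₂ : IsControl 0 T ω₂)
    (hyp : ∀ s t, s ∈ Set.Icc (0 : ℝ) T → t ∈ Set.Icc (0 : ℝ) T → s < t → ω₁ s t ≤ L →
      G t - G s ≤ C * (⨆ r : Set.Icc (0 : ℝ) t, G r) * (ω₁ s t) ^ (1 / κ) + ω₂ s t) :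
    (⨆ t : Set.Icc (0 : ℝ) T, G t) ≤
      2 * Real.exp (ω₁ 0 T / (min 1 (1 / (L * (2 * C * Real.exp 2) ^ κ)) * L)) *
        (G 0 + ⨆ t : Set.Icc (0 : ℝ) T,
          ω₂ 0 t * Real.exp (-(ω₁ 0 t) / (min 1 (1 / (L * (2 * C * Real.exp 2) ^ κ)) * L))) := by
  classical
  obtain ⟨⟨hω₁0, hω₁add⟩, hreg⟩ := hω₁
  obtain ⟨hω₂0, hω₂add⟩ := hω₂
  have hκ0 : (0:ℝ) < κ := lt_of_lt_of_le one_pos hκ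
  have hκinv : (0:ℝ) < 1/κ := by positivity
  have hG0 : 0 ≤ G 0 := hGnonneg 0 ⟨le_rfl, hT.le⟩
  -- numerics for e and e²
  have he1l : (2.7182818283:ℝ) < Real.exp 1 := Real.exp_one_gt_d9
  have he1u : Real.exp 1 < 2.7182818286 := Real.exp_one_lt_d9
  have hexp2 : Real.exp 2 = Real.exp 1 * Real.exp 1 := by
    rw [← Real.exp_add]; norm_num
  have hEl : (7.389:ℝ) < Real.exp 2 := by rw [hexp2]; nlinarith
  have hEu : Real.exp 2 < 7.39 := by rw [hexp2]; nlinarith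
  -- the step size
  set a : ℝ := min 1 (1 / (L * (2 * C * Real.exp 2) ^ κ)) * L with haDef
  have hPpos : (0:ℝ) < 2 * C * Real.exp 2 := by positivity
  have hPκpos : (0:ℝ) < (2 * C * Real.exp 2) ^ κ := Real.rpow_pos_of_pos hPpos κ
  have hαpos : (0:ℝ) < min 1 (1 / (L * (2 * C * Real.exp 2) ^ κ)) := by positivity
  have hapos : 0 < a := mul_pos hαpos hL
  have haL : a ≤ L := by
    have h1 : min 1 (1 / (L * (2 * C * Real.exp 2) ^ κ)) ≤ 1 := min_le_left _ _
    calc a ≤ 1 * L := mul_le_mul_of_nonneg_right h1 hL.le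
      _ = L := one_mul L
  -- β and its bound
  set β : ℝ := C * a ^ (1/κ) with hβDef
  have hbnn : 0 ≤ β := mul_nonneg hC.le (Real.rpow_nonneg (by positivity) _)
  have hββ : β ≤ 1 / (2 * Real.exp 2) := by
    have ha1 : a ≤ ((2 * C * Real.exp 2) ^ κ)⁻¹ := by
      have h1 : min 1 (1 / (L * (2 * C * Real.exp 2) ^ κ)) ≤ 1 / (L * (2 * C * Real.exp 2) ^ κ) :=
        min_le_right _ _
      calc a ≤ (1 / (L * (2 * C * Real.exp 2) ^ κ)) * L :=
            mul_le_mul_of_nonneg_right h1 hL.le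
        _ = ((2 * C * Real.exp 2) ^ κ)⁻¹ := by field_simp
    have ha2 : a ^ (1/κ) ≤ (((2 * C * Real.exp 2) ^ κ)⁻¹) ^ (1/κ) :=
      Real.rpow_le_rpow (by positivity) ha1 hκinv.le
    have ha3 : (((2 * C * Real.exp 2) ^ κ)⁻¹) ^ (1/κ) = (2 * C * Real.exp 2)⁻¹ := by
      rw [← Real.rpow_neg hPpos.le, ← Real.rpow_mul hPpos.le,
        show -κ * (1/κ) = -1 by field_simp, Real.rpow_neg_one]
    calc β ≤ C * (2 * C * Real.exp 2)⁻¹ := by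
          rw [hβDef]
          exact mul_le_mul_of_nonneg_left (ha3 ▸ ha2) hC.le
      _ = 1 / (2 * Real.exp 2) := by field_simp
  -- numeric constants q and μ
  set q : ℝ := (1 - 1/(2 * Real.exp 2))⁻¹ with hqDef
  have h1d : (0:ℝ) < 1/(2*Real.exp 2) := by positivity
  have hdpos : (0:ℝ) < 1 - 1/(2 * Real.exp 2) := by
    have : 1/(2*Real.exp 2) < 1/2 := by
      apply one_div_lt_one_div_of_lt <;> nlinarith
    linarith
  have hdl : (0.9323:ℝ) ≤ 1 - 1/(2 * Real.exp 2) := by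
    have : 1/(2*Real.exp 2) ≤ 0.0677 := by
      rw [div_le_iff₀ (by nlinarith)]; nlinarith
    linarith
  have hqinvpos : 0 < q := by rw [hqDef]; exact inv_pos.2 hdpos
  have hdd : (1 - 1/(2 * Real.exp 2)) * q = 1 := by
    rw [hqDef]; exact mul_inv_cancel₀ (ne_of_gt hdpos)
  have hq1 : 1 ≤ q := by nlinarith [mul_pos h1d hqinvpos]
  have hq2 : q ≤ 1.0727 := by
    nlinarith [mul_nonneg (by linarith : (0:ℝ) ≤ 1 - 1/(2*Real.exp 2) - 0.9323) hqinvpos.le]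
  have hq2e : q^2 < Real.exp 1 := by nlinarith [sq_nonneg (1.0727 - q)]
  have hqq2 : q ≤ q^2 := by nlinarith
  have hqq3 : q ≤ q^3 := by nlinarith
  have hq23 : q^2 ≤ q^3 := by nlinarith
  have hq3nn : (0:ℝ) ≤ q^3 := by positivity
  set μ : ℝ := q^2 * (q^2 - 1) / (Real.exp 1 - q^2) with hμDef
  have hμnn : 0 ≤ μ := by
    apply div_nonneg (mul_nonneg (by positivity) (by nlinarith)) (by linarith)
  have hc1 : 0 ≤ q * (q^2 * (q^2 - 1)) := by nlinarith
  have hμe : μ * (Real.exp 1 - q^2) = q^2 * (q^2 - 1) :=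
    div_mul_cancel₀ _ (by linarith)
  have hμub : μ ≤ 0.111 := by
    rw [hμDef, div_le_iff₀ (by linarith)]
    nlinarith [sq_nonneg (q - 1.0727), sq_nonneg (q^2 - 1.15068529)]
  have hnum : q^3 + q * μ ≤ 2 := by
    have e1 : q^3 ≤ 1.0727^3 := pow_le_pow_left₀ (by positivity) hq2 3
    have e2 : q*μ ≤ 1.0727*0.111 := mul_le_mul hq2 hμub hμnn (by norm_num)
    nlinarith
  -- basic control facts
  have hω₁mono : ∀ s u v, 0 ≤ s → s ≤ u → u ≤ v → v ≤ T → ω₁ s u ≤ ω₁ s v := by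
    intro s u v h0 h1 h2 h3
    have := hω₁add s u v h0 h1 h2 h3
    have := hω₁0 u v (le_trans h0 h1) h2 h3
    linarith
  have hω₂monoR : ∀ s u v, 0 ≤ s → s ≤ u → u ≤ v → v ≤ T → ω₂ s u ≤ ω₂ s v := by
    intro s u v h0 h1 h2 h3
    have := hω₂add s u v h0 h1 h2 h3
    have := hω₂0 u v (le_trans h0 h1) h2 h3
    linarith
  -- the greedy sequence
  set τ : ℕ → ℝ := rgSeq T a ω₁ with hτDef
  have hτ0 : τ 0 = 0 := rfl
  have hτs : ∀ k, τ (k+1) = sSup {u : ℝ | u ∈ Set.Icc (τ k) T ∧ ω₁ (τ k) u ≤ a} :=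
    fun k => rfl
  have hτall : ∀ k, 0 ≤ τ k ∧ τ k ≤ T := by
    intro k
    induction k with
    | zero => rw [hτ0]; exact ⟨le_refl 0, hT.le⟩
    | succ n ih =>
      have hself : ω₁ (τ n) (τ n) ≤ a := by
        have h1 := hω₁add (τ n) (τ n) (τ n) ih.1 le_rfl le_rfl ih.2
        linarith
      have hmem : τ n ∈ {u : ℝ | u ∈ Set.Icc (τ n) T ∧ ω₁ (τ n) u ≤ a} :=
        ⟨⟨le_rfl, ih.2⟩, hself⟩
      have hbd : BddAbove {u : ℝ | u ∈ Set.Icc (τ n) T ∧ ω₁ (τ n) u ≤ a} :=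
        ⟨T, fun u hu => hu.1.2⟩
      constructor
      · rw [hτs]; exact le_trans ih.1 (le_csSup hbd hmem)
      · rw [hτs]; exact csSup_le ⟨τ n, hmem⟩ (fun u hu => hu.1.2)
  have hτle : ∀ k, τ k ≤ τ (k+1) := by
    intro k
    have hself : ω₁ (τ k) (τ k) ≤ a := by
      have h1 := hω₁add (τ k) (τ k) (τ k) (hτall k).1 le_rfl le_rfl (hτall k).2
      linarith
    rw [hτs]
    exact le_csSup ⟨T, fun u hu => hu.1.2⟩ ⟨⟨le_rfl, (hτall k).2⟩, hself⟩
  have hτmono : Monotone τ := monotone_nat_of_le_succ hτle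
  obtain ⟨δ, hδpos, hδ⟩ := hreg a hapos
  have hstep : ∀ k, τ k < T → min T (τ k + δ/2) ≤ τ (k+1) := by
    intro k hk
    rw [hτs]
    apply le_csSup ⟨T, fun u hu => hu.1.2⟩
    refine ⟨⟨le_min (hτall k).2 (by linarith), min_le_left _ _⟩, ?_⟩
    apply le_of_lt
    apply hδ (τ k) _ (hτall k).1 (le_min (hτall k).2 (by linarith)) (min_le_left _ _)
    have := min_le_right T (τ k + δ/2)
    linarith
  -- termination
  have hex : ∃ k, τ k = T := by
    obtain ⟨n, hn⟩ := exists_nat_gt (2*T/δ)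
    have haux : ∀ k : ℕ, τ k = T ∨ (k:ℝ)*(δ/2) ≤ τ k := by
      intro k
      induction k with
      | zero => right; rw [hτ0]; norm_num
      | succ m ih =>
        rcases eq_or_lt_of_le (hτall m).2 with hm | hm
        · left
          exact le_antisymm (hτall (m+1)).2 (hm ▸ hτle m)
        · rcases ih with ih | ih
          · exact absurd ih (ne_of_lt hm)
          · have hst := hstep m hm
            rcases le_or_gt T (τ m + δ/2) with h | h
            · left
              refine le_antisymm (hτall (m+1)).2 ?_
              calc T = min T (τ m + δ/2) := (min_eq_left h).symm
                _ ≤ τ (m+1) := hst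
            · right
              have h2 : τ m + δ/2 ≤ τ (m+1) := by
                calc τ m + δ/2 = min T (τ m + δ/2) := (min_eq_right h.le).symm
                  _ ≤ τ (m+1) := hst
              push_cast
              linarith
    refine ⟨n, ?_⟩
    rcases haux n with h | h
    · exact h
    · by_contra hne
      have h1 : τ n < T := lt_of_le_of_ne (hτall n).2 hne
      have h2 : 2*T/δ < (n:ℝ) := hn
      have h3 : T < (n:ℝ) * (δ/2) := by
        rw [div_lt_iff₀ hδpos] at h2
        linarith
      linarith
  set N : ℕ := Nat.find hex with hNDef
  have hNT : τ N = T := Nat.find_spec hex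
  have hNlt : ∀ k, k < N → τ k < T := fun k hk =>
    lt_of_le_of_ne (hτall k).2 (Nat.find_min hex hk)
  -- key facts about the sequence
  have hF1 : ∀ k u, τ k ≤ u → u < τ (k+1) → ω₁ (τ k) u ≤ a := by
    intro k u hu1 hu2
    rw [hτs] at hu2
    have hself : ω₁ (τ k) (τ k) ≤ a := by
      have h1 := hω₁add (τ k) (τ k) (τ k) (hτall k).1 le_rfl le_rfl (hτall k).2
      linarith
    have hne : Set.Nonempty {u : ℝ | u ∈ Set.Icc (τ k) T ∧ ω₁ (τ k) u ≤ a} :=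
      ⟨τ k, ⟨⟨le_rfl, (hτall k).2⟩, hself⟩⟩
    obtain ⟨v, hv, huv⟩ := exists_lt_of_lt_csSup hne hu2
    exact le_trans (hω₁mono (τ k) u v (hτall k).1 hu1 huv.le hv.1.2) hv.2
  have hF2 : ∀ k, k+1 < N → a < ω₁ (τ k) (τ (k+2)) := by
    intro k hk
    have hkT : τ (k+1) < T := hNlt (k+1) hk
    have h1 : τ (k+1) < τ (k+2) := by
      have hst := hstep (k+1) hkT
      have h2 : τ (k+1) < min T (τ (k+1) + δ/2) := lt_min hkT (by linarith)
      linarith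
    by_contra hle
    push_neg at hle
    have hmem : τ (k+2) ∈ {u : ℝ | u ∈ Set.Icc (τ k) T ∧ ω₁ (τ k) u ≤ a} :=
      ⟨⟨hτmono (by omega), (hτall (k+2)).2⟩, hle⟩
    have : τ (k+2) ≤ τ (k+1) := by
      rw [hτs k]
      exact le_csSup ⟨T, fun u hu => hu.1.2⟩ hmem
    linarith
  -- case split on boundedness
  by_cases hbdd : BddAbove (G '' Set.Icc 0 T)
  swap
  · have hlhs : (⨆ t : Set.Icc (0:ℝ) T, G t) = 0 := by
      apply Real.iSup_of_not_bddAbove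
      rwa [← Set.image_eq_range]
    rw [hlhs]
    have h2 : (0:ℝ) ≤ ⨆ t : Set.Icc (0:ℝ) T,
        ω₂ 0 t * Real.exp (-(ω₁ 0 t) / a) := by
      apply Real.iSup_nonneg
      intro t
      exact mul_nonneg (hω₂0 0 t le_rfl t.2.1 t.2.2) (Real.exp_pos _).le
    exact mul_nonneg (mul_nonneg (by norm_num) (Real.exp_pos _).le) (add_nonneg hG0 h2)
  -- sups over subintervals
  have hbdu : ∀ u, u ≤ T → BddAbove (G '' Set.Icc 0 u) := fun u hu =>
    hbdd.mono (Set.image_mono (Set.Icc_subset_Icc_right hu))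
  have hsup_eq : ∀ u : ℝ, (⨆ r : Set.Icc (0:ℝ) u, G r) = sSup (G '' Set.Icc 0 u) := by
    intro u
    rw [Set.image_eq_range, sSup_range]
  have hGsub : ∀ u r, 0 ≤ r → r ≤ u → u ≤ T → G r ≤ sSup (G '' Set.Icc 0 u) := by
    intro u r h0 h1 h2
    exact le_csSup (hbdu u h2) ⟨r, ⟨h0, h1⟩, rfl⟩
  have hGsnn : ∀ u, 0 ≤ u → u ≤ T → 0 ≤ sSup (G '' Set.Icc 0 u) := fun u h0 h1 =>
    le_trans hG0 (hGsub u 0 le_rfl h0 h1)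
  have hGsmono : ∀ u v, 0 ≤ u → u ≤ v → v ≤ T →
      sSup (G '' Set.Icc 0 u) ≤ sSup (G '' Set.Icc 0 v) := by
    intro u v h0 h1 h2
    refine csSup_le_csSup (hbdu v h2) ?_ (Set.image_mono (Set.Icc_subset_Icc_right h1))
    exact ⟨G 0, 0, ⟨le_rfl, h0⟩, rfl⟩
  have hGs0 : sSup (G '' Set.Icc 0 (0:ℝ)) = G 0 := by
    rw [Set.Icc_self, Set.image_singleton, csSup_singleton]
  -- the weighted supremum H
  set H : ℝ := ⨆ t : Set.Icc (0:ℝ) T, ω₂ 0 t * Real.exp (-(ω₁ 0 t) / a) with hHDef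
  have hHbdd : BddAbove (Set.range fun t : Set.Icc (0:ℝ) T =>
      ω₂ 0 t * Real.exp (-(ω₁ 0 t) / a)) := by
    refine ⟨ω₂ 0 T, ?_⟩
    rintro x ⟨t, rfl⟩
    have h1 : ω₂ 0 t ≤ ω₂ 0 T := hω₂monoR 0 t T le_rfl t.2.1 t.2.2 le_rfl
    have h2 : Real.exp (-(ω₁ 0 t) / a) ≤ 1 := by
      rw [Real.exp_le_one_iff]
      have := hω₁0 0 t le_rfl t.2.1 t.2.2
      apply div_nonpos_of_nonpos_of_nonneg <;> linarith
    have h0 : 0 ≤ ω₂ 0 (t:ℝ) := hω₂0 0 t le_rfl t.2.1 t.2.2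
    calc ω₂ 0 t * Real.exp (-(ω₁ 0 t) / a) ≤ ω₂ 0 t * 1 :=
          mul_le_mul_of_nonneg_left h2 h0
      _ = ω₂ 0 t := mul_one _
      _ ≤ ω₂ 0 T := h1
  have hHub : ∀ u, 0 ≤ u → u ≤ T → ω₂ 0 u * Real.exp (-(ω₁ 0 u) / a) ≤ H := by
    intro u h0 h1
    exact le_ciSup hHbdd (⟨u, h0, h1⟩ : Set.Icc (0:ℝ) T)
  have hHnn : 0 ≤ H := by
    apply Real.iSup_nonneg
    intro t
    exact mul_nonneg (hω₂0 0 t le_rfl t.2.1 t.2.2) (Real.exp_pos _).le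
  have hΩH : ∀ u, 0 ≤ u → u ≤ T → ω₂ 0 u ≤ H * Real.exp (ω₁ 0 u / a) := by
    intro u h0 h1
    have h2 := hHub u h0 h1
    have h3 : Real.exp (-(ω₁ 0 u) / a) * Real.exp (ω₁ 0 u / a) = 1 := by
      rw [← Real.exp_add, show -(ω₁ 0 u) / a + ω₁ 0 u / a = 0 by ring]
      exact Real.exp_zero
    have h4 := mul_le_mul_of_nonneg_right h2 (Real.exp_pos (ω₁ 0 u / a)).le
    calc ω₂ 0 u = ω₂ 0 u * (Real.exp (-(ω₁ 0 u) / a) * Real.exp (ω₁ 0 u / a)) := by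
          rw [h3, mul_one]
      _ = ω₂ 0 u * Real.exp (-(ω₁ 0 u) / a) * Real.exp (ω₁ 0 u / a) := by ring
      _ ≤ H * Real.exp (ω₁ 0 u / a) := h4
  -- THE RECURSION
  have hrec : ∀ k, sSup (G '' Set.Icc 0 (τ (k+1))) ≤
      q * (sSup (G '' Set.Icc 0 (τ k)) + ω₂ (τ k) (τ (k+1))) := by
    intro k
    set S : ℝ := sSup (G '' Set.Icc 0 (τ k)) with hSDef
    set K : ℝ := sSup (G '' Set.Icc 0 (τ (k+1))) with hKDef
    set w : ℝ := ω₂ (τ k) (τ (k+1)) with hwDef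
    have hτk0 : 0 ≤ τ k := (hτall k).1
    have hτkT : τ k ≤ T := (hτall k).2
    have hτk10 : 0 ≤ τ (k+1) := (hτall (k+1)).1
    have hτk1T : τ (k+1) ≤ T := (hτall (k+1)).2
    have hSnn : 0 ≤ S := hGsnn _ hτk0 hτkT
    have hKnn : 0 ≤ K := hGsnn _ hτk10 hτk1T
    have hwnn : 0 ≤ w := hω₂0 _ _ hτk0 (hτle k) hτk1T
    rcases eq_or_lt_of_le (hτle k) with heq | hlt
    · -- degenerate step
      have hKS : K ≤ S := le_of_eq (by rw [hKDef, hSDef, heq])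
      linarith [mul_le_mul_of_nonneg_right hq1 (add_nonneg hSnn hwnn)]
    · -- real step
      have key1 : ∀ u, τ k < u → u < τ (k+1) → G u ≤ S + β * K + ω₂ (τ k) u := by
        intro u hu1 hu2
        have huT : u ≤ T := le_trans hu2.le hτk1T
        have hu0 : 0 ≤ u := le_trans hτk0 hu1.le
        have hω₁u : ω₁ (τ k) u ≤ a := hF1 k u hu1.le hu2
        have h := hyp (τ k) u ⟨hτk0, hτkT⟩ ⟨hu0, huT⟩ hu1 (le_trans hω₁u haL)
        rw [hsup_eq u] at h
        have t1 : ω₁ (τ k) u ^ (1/κ) ≤ a ^ (1/κ) :=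
          Real.rpow_le_rpow (hω₁0 _ _ hτk0 hu1.le huT) hω₁u hκinv.le
        have t2 : sSup (G '' Set.Icc 0 u) ≤ K := hGsmono u (τ (k+1)) hu0 hu2.le hτk1T
        have t3 : 0 ≤ sSup (G '' Set.Icc 0 u) := hGsnn u hu0 huT
        have t4 : C * sSup (G '' Set.Icc 0 u) * ω₁ (τ k) u ^ (1/κ) ≤ C * K * a ^ (1/κ) :=
          mul_le_mul (mul_le_mul_of_nonneg_left t2 hC.le) t1
            (Real.rpow_nonneg (hω₁0 _ _ hτk0 hu1.le huT) _)
            (mul_nonneg hC.le hKnn)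
        have t5 : C * K * a ^ (1/κ) = β * K := by rw [hβDef]; ring
        have t6 : G (τ k) ≤ S := hGsub (τ k) (τ k) hτk0 le_rfl hτkT
        linarith
      have key2 : G (τ (k+1)) ≤ S + β * K + w := by
        apply le_of_forall_pos_le_add
        intro ε hε
        have hCK : (0:ℝ) < C*K+1 := by linarith [mul_nonneg hC.le hKnn]
        set εc : ℝ := min a ((ε/(C*K+1)) ^ κ) with hεcDef
        have hεcpos : 0 < εc := lt_min hapos (Real.rpow_pos_of_pos (div_pos hε hCK) _)
        obtain ⟨δ', hδ'pos, hδ'⟩ := hreg εc hεcpos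
        set s : ℝ := max (τ k) (max (τ (k+1) - δ'/2) ((τ k + τ (k+1))/2)) with hsDef
        have hs1 : τ k ≤ s := le_max_left _ _
        have hs2 : s < τ (k+1) := by
          apply max_lt hlt
          apply max_lt (by linarith) (by linarith)
        have hs0 : 0 ≤ s := le_trans hτk0 hs1
        have hsT : s ≤ T := le_trans hs2.le hτk1T
        have hsδ : τ (k+1) - s < δ' := by
          have : τ (k+1) - δ'/2 ≤ s := le_trans (le_max_left _ _) (le_max_right _ _)
          linarith
        have hω₁s : ω₁ s (τ (k+1)) < εc := hδ' s (τ (k+1)) hs0 hs2.le hτk1T hsδ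
        have hω₁snn : 0 ≤ ω₁ s (τ (k+1)) := hω₁0 _ _ hs0 hs2.le hτk1T
        have h := hyp s (τ (k+1)) ⟨hs0, hsT⟩ ⟨hτk10, hτk1T⟩ hs2
          (le_trans hω₁s.le (le_trans (min_le_left _ _) haL))
        rw [hsup_eq (τ (k+1))] at h
        -- bound the rpow term by ε
        have t1 : ω₁ s (τ (k+1)) ^ (1/κ) ≤ ε/(C*K+1) := by
          have i1 : ω₁ s (τ (k+1)) ^ (1/κ) ≤ ((ε/(C*K+1)) ^ κ) ^ (1/κ) :=
            Real.rpow_le_rpow hω₁snn (le_trans hω₁s.le (min_le_right _ _)) hκinv.le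
          have i2 : ((ε/(C*K+1)) ^ κ) ^ (1/κ) = ε/(C*K+1) := by
            rw [← Real.rpow_mul (div_pos hε hCK).le,
              show κ * (1/κ) = 1 by field_simp, Real.rpow_one]
          rw [i2] at i1
          exact i1
        have t3 : C * K * ω₁ s (τ (k+1)) ^ (1/κ) ≤ ε := by
          have t2 : C * K * (ε/(C*K+1)) ≤ ε := by
            rw [← mul_div_assoc, div_le_iff₀ hCK]
            linarith [mul_nonneg hC.le hKnn, hε]
          calc C * K * ω₁ s (τ (k+1)) ^ (1/κ) ≤ C * K * (ε/(C*K+1)) :=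
              mul_le_mul_of_nonneg_left t1 (mul_nonneg hC.le hKnn)
            _ ≤ ε := t2
        -- bound G s + ω₂ s (τ (k+1))
        have t4 : G s + ω₂ s (τ (k+1)) ≤ S + β * K + w := by
          rcases eq_or_lt_of_le hs1 with heq | hlt'
          · have e1 : G s ≤ S := heq ▸ hGsub (τ k) (τ k) hτk0 le_rfl hτkT
            have e2 : ω₂ s (τ (k+1)) ≤ w := le_of_eq (by rw [hwDef, ← heq])
            linarith [mul_nonneg hbnn hKnn]
          · have e1 : G s ≤ S + β * K + ω₂ (τ k) s := key1 s hlt' hs2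
            have e2 : ω₂ (τ k) s + ω₂ s (τ (k+1)) ≤ w :=
              hω₂add (τ k) s (τ (k+1)) hτk0 hs1 hs2.le hτk1T
            linarith
        linarith
      have key3 : K ≤ S + β * K + w := by
        rw [hKDef]
        refine csSup_le ⟨G 0, 0, ⟨le_rfl, hτk10⟩, rfl⟩ ?_
        rintro x ⟨u, ⟨hu0, hu1⟩, rfl⟩
        rcases le_or_gt u (τ k) with h | h
        · have hu : G u ≤ S := hGsub (τ k) u hu0 h hτkT
          linarith [mul_nonneg hbnn hKnn]
        · rcases eq_or_lt_of_le hu1 with heq | hlt'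
          · rw [heq]; exact key2
          · have e1 := key1 u h hlt'
            have e2 : ω₂ (τ k) u ≤ w :=
              hω₂monoR (τ k) u (τ (k+1)) hτk0 h.le hlt'.le hτk1T
            linarith
      -- conclude
      have hd : (1 - 1/(2*Real.exp 2)) * K ≤ S + w := by
        linarith [mul_le_mul_of_nonneg_right hββ hKnn]
      have h5 := mul_le_mul_of_nonneg_left hd hqinvpos.le
      have h6 : q * ((1 - 1/(2*Real.exp 2)) * K) = K := by
        rw [hqDef, ← mul_assoc, inv_mul_cancel₀ (ne_of_gt hdpos), one_mul]
      linarith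
  -- two-step recursion
  have hrec2 : ∀ k, sSup (G '' Set.Icc 0 (τ (k+2))) ≤
      q^2 * (sSup (G '' Set.Icc 0 (τ k)) + (ω₂ 0 (τ (k+2)) - ω₂ 0 (τ k))) := by
    intro k
    have h1 := hrec k
    have h2 := hrec (k+1)
    have hw1 : 0 ≤ ω₂ (τ k) (τ (k+1)) := hω₂0 _ _ (hτall k).1 (hτle k) (hτall (k+1)).2
    have hw2 : 0 ≤ ω₂ (τ (k+1)) (τ (k+2)) :=
      hω₂0 _ _ (hτall (k+1)).1 (hτle (k+1)) (hτall (k+2)).2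
    have hsum : ω₂ 0 (τ k) + (ω₂ (τ k) (τ (k+1)) + ω₂ (τ (k+1)) (τ (k+2))) ≤
        ω₂ 0 (τ (k+2)) := by
      have i1 := hω₂add (τ k) (τ (k+1)) (τ (k+2)) (hτall k).1 (hτle k) (hτle (k+1))
        (hτall (k+2)).2
      have i2 := hω₂add 0 (τ k) (τ (k+2)) le_rfl (hτall k).1 (hτmono (by omega : k ≤ k+2))
        (hτall (k+2)).2
      linarith
    have e1 : sSup (G '' Set.Icc 0 (τ (k+2))) ≤
        q * (q * (sSup (G '' Set.Icc 0 (τ k)) + ω₂ (τ k) (τ (k+1))) + ω₂ (τ (k+1)) (τ (k+2))) :=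
      le_trans h2 (mul_le_mul_of_nonneg_left (by linarith) hqinvpos.le)
    have e4 : q * ω₂ (τ (k+1)) (τ (k+2)) ≤ q^2 * ω₂ (τ (k+1)) (τ (k+2)) :=
      mul_le_mul_of_nonneg_right hqq2 hw2
    have e6 : q^2 * (ω₂ (τ k) (τ (k+1)) + ω₂ (τ (k+1)) (τ (k+2))) ≤
        q^2 * (ω₂ 0 (τ (k+2)) - ω₂ 0 (τ k)) :=
      mul_le_mul_of_nonneg_left (by linarith) (by positivity)
    linarith [e1, e4, e6]
  -- counting lemma : ω₁ 0 (τ (2j)) ≥ j * a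
  have hcount : ∀ j : ℕ, 2*j ≤ N → (j:ℝ) * a ≤ ω₁ 0 (τ (2*j)) := by
    intro j
    induction j with
    | zero =>
      intro _
      simp only [Nat.cast_zero, zero_mul, Nat.mul_zero, hτ0]
      exact hω₁0 0 0 le_rfl le_rfl hT.le
    | succ i ih =>
      intro h
      have h' : 2*i ≤ N := by omega
      have hi := ih h'
      have hF := hF2 (2*i) (by omega)
      have hadd := hω₁add 0 (τ (2*i)) (τ (2*i+2)) le_rfl (hτall (2*i)).1
        (hτmono (by omega : 2*i ≤ 2*i+2)) (hτall (2*i+2)).2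
      have heq : 2*(i+1) = 2*i+2 := by omega
      rw [heq]
      push_cast
      linarith
  -- the main induction
  have main : ∀ k, k ≤ N → sSup (G '' Set.Icc 0 (τ k)) ≤
      q^k * G 0 + q^3 * ω₂ 0 (τ k) + q * μ * Real.exp (ω₁ 0 (τ k) / a) * H := by
    intro k
    induction k using Nat.strong_induction_on with
    | _ k ih =>
      match k, ih with
      | 0, _ =>
        intro _
        rw [hτ0, hGs0, pow_zero, one_mul]
        have h1 : 0 ≤ ω₂ 0 (0:ℝ) := hω₂0 0 0 le_rfl le_rfl hT.le
        have h2 : 0 ≤ q * μ * Real.exp (ω₁ 0 0 / a) * H :=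
          mul_nonneg (mul_nonneg (mul_nonneg hqinvpos.le hμnn) (Real.exp_pos _).le) hHnn
        linarith [mul_nonneg hq3nn h1]
      | 1, _ =>
        intro _
        have h1 := hrec 0
        rw [hτ0, hGs0] at h1
        have hΩnn : 0 ≤ ω₂ 0 (τ 1) := hω₂0 0 (τ 1) le_rfl (hτall 1).1 (hτall 1).2
        have h2 : 0 ≤ q * μ * Real.exp (ω₁ 0 (τ 1) / a) * H :=
          mul_nonneg (mul_nonneg (mul_nonneg hqinvpos.le hμnn) (Real.exp_pos _).le) hHnn
        have h4 : q * ω₂ 0 (τ 1) ≤ q^3 * ω₂ 0 (τ 1) := mul_le_mul_of_nonneg_right hqq3 hΩnn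
        rw [pow_one]
        linarith
      | (m+2), ih =>
        intro h
        have hP := ih m (by omega) (by omega)
        have h2 := hrec2 m
        -- exponential growth over two steps
        have hφ : Real.exp 1 * Real.exp (ω₁ 0 (τ m) / a) ≤
            Real.exp (ω₁ 0 (τ (m+2)) / a) := by
          have hF := hF2 m (by omega)
          have hadd := hω₁add 0 (τ m) (τ (m+2)) le_rfl (hτall m).1
            (hτmono (by omega : m ≤ m+2)) (hτall (m+2)).2
          rw [← Real.exp_add]
          apply Real.exp_le_exp.2
          rw [le_div_iff₀ hapos]
          have he : (1 + ω₁ 0 (τ m) / a) * a = a + ω₁ 0 (τ m) := by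
            field_simp
          rw [he]
          linarith
        have hΩm : ω₂ 0 (τ m) ≤ Real.exp (ω₁ 0 (τ m) / a) * H := by
          rw [mul_comm]
          exact hΩH _ (hτall m).1 (hτall m).2
        have hΩmono : ω₂ 0 (τ m) ≤ ω₂ 0 (τ (m+2)) :=
          hω₂monoR 0 (τ m) (τ (m+2)) le_rfl (hτall m).1 (hτmono (by omega : m ≤ m+2))
            (hτall (m+2)).2
        have hφm : (0:ℝ) < Real.exp (ω₁ 0 (τ m) / a) := Real.exp_pos _
        have hPq : q^2 * sSup (G '' Set.Icc 0 (τ m)) ≤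
            q^2 * (q^m * G 0 + q^3 * ω₂ 0 (τ m) + q * μ * Real.exp (ω₁ 0 (τ m) / a) * H) :=
          mul_le_mul_of_nonneg_left hP (by positivity)
        have c2 : 0 ≤ q * μ := mul_nonneg hqinvpos.le hμnn
        have A1 : q * μ * (Real.exp 1 * Real.exp (ω₁ 0 (τ m) / a)) * H ≤
            q * μ * Real.exp (ω₁ 0 (τ (m+2)) / a) * H :=
          mul_le_mul_of_nonneg_right (mul_le_mul_of_nonneg_left hφ c2) hHnn
        have A2 : q * μ * (Real.exp 1 * Real.exp (ω₁ 0 (τ m) / a)) * H =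
            q^3 * μ * Real.exp (ω₁ 0 (τ m) / a) * H +
              q * (q^2 * (q^2 - 1)) * (Real.exp (ω₁ 0 (τ m) / a) * H) := by
          rw [← hμe]; ring
        have A3 : q * (q^2 * (q^2 - 1)) * ω₂ 0 (τ m) ≤
            q * (q^2 * (q^2 - 1)) * (Real.exp (ω₁ 0 (τ m) / a) * H) :=
          mul_le_mul_of_nonneg_left hΩm hc1
        have A4 : 0 ≤ (q^3 - q^2) * (ω₂ 0 (τ (m+2)) - ω₂ 0 (τ m)) :=
          mul_nonneg (by linarith) (by linarith)
        have hpow : q^(m+2) = q^2 * q^m := by ring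
        rw [hpow]
        linarith [h2, hPq, A1, A2, A3, A4]
  -- final assembly
  have hfin := main N le_rfl
  rw [hNT] at hfin
  have hΩT : ω₂ 0 T ≤ H * Real.exp (ω₁ 0 T / a) := hΩH T hT.le le_rfl
  have hqN : q^N ≤ 2 * Real.exp (ω₁ 0 T / a) := by
    have h2m : 2*(N/2) ≤ N := by omega
    have hN2 : N ≤ 2*(N/2)+1 := by omega
    have hc := hcount (N/2) h2m
    have hτ2mT : τ (2*(N/2)) ≤ T := by
      have := hτmono h2m
      rwa [hNT] at this
    have hψ : ((N/2 : ℕ):ℝ) * a ≤ ω₁ 0 T := by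
      have := hω₁mono 0 (τ (2*(N/2))) T le_rfl (hτall _).1 hτ2mT le_rfl
      linarith
    have hma : ((N/2 : ℕ):ℝ) ≤ ω₁ 0 T / a := by
      rw [le_div_iff₀ hapos]
      linarith
    have p1 : (q^2)^(N/2) ≤ (Real.exp 1)^(N/2) :=
      pow_le_pow_left₀ (by positivity) hq2e.le _
    have p2 : (0:ℝ) ≤ (q^2)^(N/2) := by positivity
    calc q^N ≤ q^(2*(N/2)+1) := pow_le_pow_right₀ hq1 hN2
      _ = q * (q^2)^(N/2) := by rw [pow_succ, pow_mul, mul_comm]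
      _ ≤ 2 * (q^2)^(N/2) := mul_le_mul_of_nonneg_right (by linarith) p2
      _ ≤ 2 * (Real.exp 1)^(N/2) := by linarith
      _ = 2 * Real.exp ((N/2 : ℕ):ℝ) := by rw [← Real.exp_one_pow]
      _ ≤ 2 * Real.exp (ω₁ 0 T / a) := by
          have := Real.exp_le_exp.2 hma
          linarith
  rw [hsup_eq T]
  have e1 : q^N * G 0 ≤ 2 * Real.exp (ω₁ 0 T / a) * G 0 :=
    mul_le_mul_of_nonneg_right hqN hG0
  have e2 : q^3 * ω₂ 0 T ≤ q^3 * (H * Real.exp (ω₁ 0 T / a)) :=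
    mul_le_mul_of_nonneg_left hΩT (by positivity)
  have eEH : 0 ≤ Real.exp (ω₁ 0 T / a) * H := mul_nonneg (Real.exp_pos _).le hHnn
  have e3 : (q^3 + q*μ) * (Real.exp (ω₁ 0 T / a) * H) ≤
      2 * (Real.exp (ω₁ 0 T / a) * H) := mul_le_mul_of_nonneg_right hnum eEH
  linarith [hfin, e1, e2, e3]
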